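/- The preorder on the quotient GL₂(Ẑ)\M₂(Ẑ) is a partial order. Concretely: for all 2×2 matrices a, b over the profinite integers Ẑ, if there exist m, n ∈ M₂(Ẑ) with a = m·b and b = n·a, then there exists u ∈ GL₂(Ẑ) with b = u·a (i.e. a and b have the same class under left multiplication by GL₂(Ẑ)). -/

import Mathlib

/-!
STATEMENT 0: For 2×2 matrices `a b` over the profinite integers `ZHat = ∏ p, ℤ_p`,
if `a = m * b` and `b = n * a` for some matrices `m n` over `ZHat`, then there is a
unit (i.e. an element of `GL₂(ZHat)`) `u` with `b = u * a`.
-/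

noncomputable section

instance (p : Nat.Primes) : Fact (p : ℕ).Prime := ⟨p.2⟩

/-- The profinite integers `Ẑ = ∏_p ℤ_p`. -/
abbrev ZHat : Type := ∀ p : Nat.Primes, ℤ_[(p : ℕ)]

/-- `M₂(Ẑ)`, the multiplicative monoid of 2×2 matrices over the profinite integers. -/
abbrev M2ZHat : Type := Matrix (Fin 2) (Fin 2) ZHat

/-- Key linear algebra lemma over a field: for any endomorphisms `f g` of a
finite-dimensional vector space, one can correct `g` by a multiple of `1 - f * g`
to make it invertible. -/
lemma aux_end_exists_unit {K V : Type*} [Field K] [AddCommGroup V] [Module K V]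
    [FiniteDimensional K V] (f g : Module.End K V) :
    ∃ h : Module.End K V, IsUnit (g + h * (1 - f * g)) := by
  classical
  set φ : Module.End K V := 1 - f * g with hφ
  set K0 : Submodule K V := LinearMap.ker φ with hK0
  -- g is injective on K0
  have hinj : Function.Injective (g.domRestrict K0) := by
    rw [← LinearMap.ker_eq_bot, LinearMap.ker_eq_bot']
    intro x hx
    have hxK : φ (x : V) = 0 := LinearMap.mem_ker.mp x.2
    have hgx : g (x : V) = 0 := hx
    have h5 : (x : V) - f (g (x : V)) = 0 := hxK
    rw [hgx, map_zero, sub_zero] at h5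
    exact Subtype.ext h5
  set W : Submodule K V := K0.map g with hW
  have hrange : LinearMap.range (g.domRestrict K0) = W := LinearMap.range_domRestrict K0 g
  -- the equivalence K0 ≃ W induced by g
  let eK : K0 ≃ₗ[K] W :=
    (LinearEquiv.ofInjective (g.domRestrict K0) hinj).trans
      (LinearEquiv.ofEq _ _ hrange)
  have heK : ∀ x : K0, (eK x : V) = g (x : V) := fun x => rfl
  obtain ⟨K', hK'⟩ := Submodule.exists_isCompl K0
  obtain ⟨W', hW'⟩ := Submodule.exists_isCompl W
  have hd1 : Module.finrank K K0 + Module.finrank K K' = Module.finrank K V :=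
    Submodule.finrank_add_eq_of_isCompl hK'
  have hd2 : Module.finrank K W + Module.finrank K W' = Module.finrank K V :=
    Submodule.finrank_add_eq_of_isCompl hW'
  have hdKW : Module.finrank K K0 = Module.finrank K W := eK.finrank_eq
  have hd : Module.finrank K K' = Module.finrank K W' := by omega
  let e' : K' ≃ₗ[K] W' := LinearEquiv.ofFinrankEq _ _ hd
  -- the automorphism u
  let u : V ≃ₗ[K] V :=
    (Submodule.prodEquivOfIsCompl K0 K' hK').symm.trans
      ((eK.prodCongr e').trans (Submodule.prodEquivOfIsCompl W W' hW'))
  have hagree : ∀ x ∈ K0, u x = g x := by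
    intro x hx
    have h1 : (Submodule.prodEquivOfIsCompl K0 K' hK').symm x = ((⟨x, hx⟩ : K0), 0) := by
      rw [LinearEquiv.symm_apply_eq]
      simp
    show (Submodule.prodEquivOfIsCompl W W' hW')
        ((eK.prodCongr e') ((Submodule.prodEquivOfIsCompl K0 K' hK').symm x)) = g x
    rw [h1]
    simp [LinearEquiv.prodCongr_apply, heK]
  have hker : K0 ≤ LinearMap.ker (u.toLinearMap - g) := by
    intro x hx
    simp [LinearMap.mem_ker, LinearMap.sub_apply, hagree x hx]
  -- factor u - g through φ
  let ψ0 : V ⧸ K0 →ₗ[K] V := K0.liftQ (u.toLinearMap - g) hker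
  let e2 : (V ⧸ LinearMap.ker φ) ≃ₗ[K] LinearMap.range φ := φ.quotKerEquivRange
  let ψ : LinearMap.range φ →ₗ[K] V := ψ0.comp e2.symm.toLinearMap
  obtain ⟨c, hc⟩ := LinearMap.exists_extend ψ
  have hfact : c.comp φ = u.toLinearMap - g := by
    ext x
    have hmem : φ x ∈ LinearMap.range φ := LinearMap.mem_range_self φ x
    have h1 : c (φ x) = ψ ⟨φ x, hmem⟩ := by
      have := congrArg (fun t => t ⟨φ x, hmem⟩) hc
      simpa using this
    have h2 : e2 (Submodule.Quotient.mk x) = ⟨φ x, hmem⟩ := by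
      apply Subtype.ext
      exact φ.quotKerEquivRange_apply_mk x
    have h3 : e2.symm ⟨φ x, hmem⟩ = Submodule.Quotient.mk x := by
      rw [← h2, LinearEquiv.symm_apply_apply]
    calc c (φ x) = ψ ⟨φ x, hmem⟩ := h1
      _ = ψ0 (e2.symm ⟨φ x, hmem⟩) := rfl
      _ = ψ0 (Submodule.Quotient.mk x) := by rw [h3]
      _ = (u.toLinearMap - g) x := Submodule.liftQ_apply _ _ _
  refine ⟨c, ?_⟩
  have : g + c * φ = u.toLinearMap := by
    rw [Module.End.mul_eq_comp, hfact]
    abel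
  rw [this]
  exact ⟨⟨u.toLinearMap, u.symm.toLinearMap,
    by ext x; simp [Module.End.mul_apply], by ext x; simp [Module.End.mul_apply]⟩, rfl⟩

/-- Matrix version of the key lemma over a field. -/
lemma aux_matrix_exists_unit {K : Type*} [Field K] (m n : Matrix (Fin 2) (Fin 2) K) :
    ∃ c : Matrix (Fin 2) (Fin 2) K, IsUnit (n + c * (1 - m * n)) := by
  classical
  let e : ((Fin 2 → K) →ₗ[K] (Fin 2 → K)) ≃ₐ[K] Matrix (Fin 2) (Fin 2) K :=
    LinearMap.toMatrixAlgEquiv'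
  obtain ⟨h, hh⟩ := aux_end_exists_unit (e.symm m) (e.symm n)
  refine ⟨e h, ?_⟩
  have : n + e h * (1 - m * n) = e (e.symm n + h * (1 - e.symm m * e.symm n)) := by
    simp [map_add, map_mul, map_sub, map_one]
  rw [this]
  exact hh.map e

/-- The result over any commutative local ring. -/
lemma aux_local_ring {R : Type*} [CommRing R] [IsLocalRing R]
    (a b m n : Matrix (Fin 2) (Fin 2) R) (ha : a = m * b) (hb : b = n * a) :
    ∃ u : (Matrix (Fin 2) (Fin 2) R)ˣ, b = u.val * a := by
  classical
  let ρ : R →+* IsLocalRing.ResidueField R := IsLocalRing.residue R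
  obtain ⟨c0, hc0⟩ := aux_matrix_exists_unit (m.map ρ) (n.map ρ)
  -- lift c0 entrywise
  have hsurj : Function.Surjective ρ := Ideal.Quotient.mk_surjective
  choose lift hlift using hsurj
  let c : Matrix (Fin 2) (Fin 2) R := fun i j => lift (c0 i j)
  have hcmap : c.map ρ = c0 := by
    ext i j; exact hlift _
  set u : Matrix (Fin 2) (Fin 2) R := n + c * (1 - m * n) with hu
  have humap : u.map ρ = n.map ρ + c0 * (1 - m.map ρ * n.map ρ) := by
    have := (ρ.mapMatrix : Matrix (Fin 2) (Fin 2) R →+*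
      Matrix (Fin 2) (Fin 2) (IsLocalRing.ResidueField R))
    show ρ.mapMatrix u = _
    rw [hu]
    rw [map_add, map_mul, map_sub, map_one, map_mul]
    show n.map ρ + c.map ρ * (1 - m.map ρ * n.map ρ) = _
    rw [hcmap]
  have hdet : IsUnit u.det := by
    have h1 : IsUnit (u.map ρ).det := by
      rw [humap]
      exact hc0.map (Matrix.detMonoidHom)
    have h2 : (u.map ρ).det = ρ u.det := (RingHom.map_det ρ u).symm
    rw [h2] at h1
    exact IsUnit.of_map ρ _ h1
  have hunit : IsUnit u := (Matrix.isUnit_iff_isUnit_det u).mpr hdet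
  obtain ⟨U, hU⟩ := hunit
  refine ⟨U, ?_⟩
  rw [hU, hu]
  have key : (1 - m * n) * a = 0 := by
    have : m * n * a = a := by rw [mul_assoc, ← hb, ← ha]
    rw [sub_mul, one_mul, this, sub_self]
  rw [add_mul, mul_assoc, key, mul_zero, add_zero, ← hb]

theorem partialOrder_on_GL2ZHat_quotient (a b : M2ZHat)
    (h : ∃ m n : M2ZHat, a = m * b ∧ b = n * a) :
    ∃ u : M2ZHatˣ, b = u.val * a := by
  classical
  obtain ⟨m, n, ha, hb⟩ := h
  -- componentwise matrices
  let A : ∀ p : Nat.Primes, Matrix (Fin 2) (Fin 2) ℤ_[(p : ℕ)] := fun p i j => a i j p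
  let B : ∀ p : Nat.Primes, Matrix (Fin 2) (Fin 2) ℤ_[(p : ℕ)] := fun p i j => b i j p
  let M : ∀ p : Nat.Primes, Matrix (Fin 2) (Fin 2) ℤ_[(p : ℕ)] := fun p i j => m i j p
  let N : ∀ p : Nat.Primes, Matrix (Fin 2) (Fin 2) ℤ_[(p : ℕ)] := fun p i j => n i j p
  have hmul : ∀ (x y : M2ZHat) (i j : Fin 2) (p : Nat.Primes),
      (x * y) i j p = ∑ k, x i k p * y k j p := by
    intro x y i j p
    show (∑ k, x i k * y k j) p = _
    rw [Finset.sum_apply]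
    rfl
  have hA : ∀ p, A p = M p * B p := by
    intro p; ext i j
    show a i j p = _
    rw [ha]
    rw [hmul m b i j p]
    rfl
  have hB : ∀ p, B p = N p * A p := by
    intro p; ext i j
    show b i j p = _
    rw [hb]
    rw [hmul n a i j p]
    rfl
  have key : ∀ p : Nat.Primes, ∃ u : (Matrix (Fin 2) (Fin 2) ℤ_[(p : ℕ)])ˣ,
      B p = u.val * A p := fun p => aux_local_ring (A p) (B p) (M p) (N p) (hA p) (hB p)
  choose U hU using key
  let V1 : M2ZHat := fun i j p => (U p).val i j
  let V2 : M2ZHat := fun i j p => (U p).inv i j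
  have hone : ∀ (i j : Fin 2) (p : Nat.Primes),
      (1 : M2ZHat) i j p = (1 : Matrix (Fin 2) (Fin 2) ℤ_[(p : ℕ)]) i j := by
    intro i j p
    by_cases hij : i = j
    · subst hij; simp [Matrix.one_apply_eq]
    · simp [Matrix.one_apply_ne hij]
  have h12 : V1 * V2 = 1 := by
    ext i j p
    rw [hmul, hone]
    have hq := congrArg (fun M => M i j) (U p).val_inv
    simp only [Matrix.mul_apply, Fin.sum_univ_two] at hq
    rw [Fin.sum_univ_two]; exact hq
  have h21 : V2 * V1 = 1 := by
    ext i j p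
    rw [hmul, hone]
    have hq := congrArg (fun M => M i j) (U p).inv_val
    simp only [Matrix.mul_apply, Fin.sum_univ_two] at hq
    rw [Fin.sum_univ_two]; exact hq
  refine ⟨⟨V1, V2, h12, h21⟩, ?_⟩
  show b = V1 * a
  ext i j p
  rw [hmul]
  have := congrArg (fun M => M i j) (hU p)
  simpa [Matrix.mul_apply] using this
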